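/- Let Ω and Θ be finite sets with |Ω| ≥ 3 and |Θ| ≥ 2. Let f : Δ(Ω) → Δ(Ω) and, for each ω ∈ Ω, g_ω : Δ(Θ) → ℝ₊^Θ be given. Then f and all g_ω are positive and continuous and the pair (f, g) is Gretherian-coherent if and only if there exist ψ : Ω → ℝ₊₊, γ : Θ → ℝ₊₊, and α > 0 such that f(p)(ω) = ψ(ω)·p(ω)^α / Σ_{ω'} ψ(ω')·p(ω')^α for all p ∈ Δ(Ω) and ω ∈ Ω, and g_ω(σ(·|ω))(θ) = γ(θ)·σ(θ|ω)^α for all ω ∈ Ω, all Blackwell experiments σ, and all θ ∈ Θ. -/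

import Mathlib

open Finset

/-- `p` is a probability distribution on the finite set `Ω`. -/
def IsDist {Ω : Type*} [Fintype Ω] (p : Ω → ℝ) : Prop :=
  (∀ ω, 0 ≤ p ω) ∧ ∑ ω, p ω = 1

/-- The Bayesian posterior of `p` given signal realization `θ` and Blackwell
experiment `σ : Ω → Δ(Θ)`: `B_σ(p,θ)(ω) = p(ω)σ(θ|ω)/Σ_{ω'} p(ω')σ(θ|ω')`. -/
noncomputable def bayes {Ω Θ : Type*} [Fintype Ω]
    (σ : Ω → Θ → ℝ) (p : Ω → ℝ) (θ : Θ) : Ω → ℝ :=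
  fun ω => p ω * σ ω θ / ∑ ω', p ω' * σ ω' θ

/-- The pair `(f, g)` is Gretherian-coherent: distorting the prior and the signal and
then updating coincides with Bayesian updating followed by distortion of the
posterior, whenever the relevant denominators are positive. -/
def GretherCoherent {Ω Θ : Type*} [Fintype Ω] [Fintype Θ]
    (f : (Ω → ℝ) → Ω → ℝ) (g : Ω → (Θ → ℝ) → Θ → ℝ) : Prop :=
  ∀ p : Ω → ℝ, IsDist p → ∀ σ : Ω → Θ → ℝ, (∀ ω, IsDist (σ ω)) → ∀ θ : Θ,
    0 < ∑ ω', p ω' * σ ω' θ → 0 < ∑ ω', f p ω' * g ω' (σ ω') θ →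
    ∀ ω : Ω, f (bayes σ p θ) ω =
      f p ω * g ω (σ ω) θ / ∑ ω', f p ω' * g ω' (σ ω') θ

/-- **Theorem (Grether)**: for `|Ω| ≥ 3` and `|Θ| ≥ 2`, `f` and all `g_ω` are positive
and continuous and `(f,g)` is Gretherian-coherent iff there are `ψ : Ω → ℝ₊₊`,
`γ : Θ → ℝ₊₊` and `α > 0` with `f(p)(ω) = ψ(ω)p(ω)^α / Σ ψ(ω')p(ω')^α` and
`g_ω(σ(·|ω))(θ) = γ(θ)σ(θ|ω)^α`. -/

lemma IsDist.exists_pos {Ω : Type*} [Fintype Ω] {p : Ω → ℝ} (hp : IsDist p) :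
    ∃ ω, 0 < p ω := by
  by_contra h
  push_neg at h
  have hz : ∀ ω, p ω = 0 := fun ω => le_antisymm (h ω) (hp.1 ω)
  have h2 := hp.2
  rw [Finset.sum_congr rfl (fun ω _ => hz ω), Finset.sum_const_zero] at h2
  exact one_ne_zero h2.symm

lemma IsDist.le_one {Ω : Type*} [Fintype Ω] {p : Ω → ℝ} (hp : IsDist p) (ω : Ω) :
    p ω ≤ 1 := by
  have h := Finset.single_le_sum (f := p) (fun i _ => hp.1 i) (Finset.mem_univ ω)
  rw [hp.2] at h
  exact h

lemma den_pos {Ω : Type*} [Fintype Ω] {ψ : Ω → ℝ} (hψ : ∀ ω, 0 < ψ ω)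
    {p : Ω → ℝ} (hp : IsDist p) {α : ℝ} :
    0 < ∑ ω', ψ ω' * p ω' ^ α := by
  obtain ⟨ω, hω⟩ := hp.exists_pos
  refine Finset.sum_pos' (fun i _ => ?_) ⟨ω, Finset.mem_univ ω, ?_⟩
  · exact mul_nonneg (hψ i).le (Real.rpow_nonneg (hp.1 i) α)
  · exact mul_pos (hψ ω) (Real.rpow_pos_of_pos hω α)

lemma cauchy_pow {Φ : ℝ → ℝ} (hc : ContinuousOn Φ (Set.Icc 0 1))
    (hpos : ∀ x ∈ Set.Ioc (0:ℝ) 1, 0 < Φ x) (h0 : Φ 0 = 0) (h1 : Φ 1 = 1)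
    (hmul : ∀ x ∈ Set.Ioc (0:ℝ) 1, ∀ y ∈ Set.Ioc (0:ℝ) 1, Φ (x * y) = Φ x * Φ y) :
    ∃ α : ℝ, 0 < α ∧ ∀ x ∈ Set.Ioc (0:ℝ) 1, Φ x = x ^ α := by
  have hmem : ∀ u : ℝ, 0 ≤ u → Real.exp (-u) ∈ Set.Ioc (0:ℝ) 1 := by
    intro u hu
    exact ⟨Real.exp_pos _, Real.exp_le_one_iff.2 (by linarith)⟩
  set L : ℝ → ℝ := fun u => Real.log (Φ (Real.exp (-u))) with hL
  have hLadd : ∀ u v : ℝ, 0 ≤ u → 0 ≤ v → L (u + v) = L u + L v := by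
    intro u v hu hv
    have h1 := hmem u hu
    have h2 := hmem v hv
    have : Real.exp (-(u + v)) = Real.exp (-u) * Real.exp (-v) := by
      rw [← Real.exp_add]; ring_nf
    simp only [hL, this, hmul _ h1 _ h2]
    exact Real.log_mul (ne_of_gt (hpos _ h1)) (ne_of_gt (hpos _ h2))
  have hL0 : L 0 = 0 := by simp [hL, h1]
  have hLnat : ∀ n : ℕ, ∀ u : ℝ, 0 ≤ u → L (n * u) = n * L u := by
    intro n
    induction n with
    | zero => intro u hu; simpa using hL0
    | succ n ih =>
      intro u hu
      have : ((n : ℝ) + 1) * u = (n : ℝ) * u + u := by ring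
      push_cast
      rw [this, hLadd _ _ (by positivity) hu, ih u hu]; ring
  have hLrat : ∀ q : ℚ, 0 ≤ q → L q = q * L 1 := by
    intro q hq
    have hden : (0:ℝ) < (q.den : ℝ) := by exact_mod_cast q.pos
    have hnum : ((q.num.toNat : ℤ) : ℝ) = (q.num : ℝ) := by
      exact_mod_cast Int.toNat_of_nonneg (Rat.num_nonneg.2 hq)
    have hqr : (q : ℝ) * q.den = q.num.toNat := by
      rw [show ((q.num.toNat : ℝ)) = (q.num : ℝ) by exact_mod_cast hnum]
      rw [Rat.cast_def]; field_simp
    have h1' : L (q.den * (q:ℝ)) = q.den * L q :=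
      hLnat q.den _ (by exact_mod_cast hq)
    have h2' : L ((q.num.toNat : ℝ) * 1) = q.num.toNat * L 1 :=
      hLnat q.num.toNat 1 zero_le_one
    rw [mul_one] at h2'
    have : (q.den : ℝ) * (q:ℝ) = (q.num.toNat : ℝ) := by rw [mul_comm]; exact hqr
    rw [this, h2'] at h1'
    have : L q = ((q.num.toNat : ℝ) / q.den) * L 1 := by
      field_simp at h1' ⊢; linarith [h1']
    rw [this]
    congr 1
    rw [show ((q.num.toNat : ℝ)) = (q.num : ℝ) from hnum, Rat.cast_def]
  have hLcont : ContinuousOn L (Set.Ici 0) := by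
    intro u hu
    have h1' := hmem u hu
    have hcexp : ContinuousWithinAt (fun u : ℝ => Real.exp (-u)) (Set.Ici 0) u :=
      (Real.continuous_exp.comp continuous_neg).continuousWithinAt
    have hmaps : Set.MapsTo (fun u : ℝ => Real.exp (-u)) (Set.Ici 0) (Set.Icc 0 1) :=
      fun v hv => ⟨(hmem v hv).1.le, (hmem v hv).2⟩
    have hΦ : ContinuousWithinAt Φ (Set.Icc 0 1) (Real.exp (-u)) :=
      hc _ ⟨(h1'.1).le, h1'.2⟩
    have hcomp : ContinuousWithinAt (Φ ∘ fun u : ℝ => Real.exp (-u)) (Set.Ici 0) u :=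
      ContinuousWithinAt.comp hΦ hcexp hmaps
    show ContinuousWithinAt (Real.log ∘ (Φ ∘ fun u : ℝ => Real.exp (-u))) (Set.Ici 0) u
    exact ContinuousAt.comp_continuousWithinAt (g := Real.log)
      (f := Φ ∘ fun u : ℝ => Real.exp (-u))
      (Real.continuousAt_log (ne_of_gt (hpos _ h1'))) hcomp
  have hlin : ∀ u : ℝ, 0 ≤ u → L u = u * L 1 := by
    intro u hu
    obtain ⟨q, hq⟩ : ∃ q : ℕ → ℚ, ∀ n : ℕ, u < q n ∧ (q n : ℝ) < u + 1/(n+1) := by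
      refine ⟨fun n => (exists_rat_btwn (lt_add_of_pos_right u (by positivity : (0:ℝ) < 1/((n:ℝ)+1)))).choose,
        fun n => ?_⟩
      exact (exists_rat_btwn (lt_add_of_pos_right u (by positivity : (0:ℝ) < 1/((n:ℝ)+1)))).choose_spec
    have htend : Filter.Tendsto (fun n => (q n : ℝ)) Filter.atTop (nhds u) := by
      have h₁ : Filter.Tendsto (fun n : ℕ => u + 1/(n+1 : ℝ)) Filter.atTop (nhds u) := by
        have := tendsto_one_div_add_atTop_nhds_zero_nat (𝕜 := ℝ)
        simpa using Filter.Tendsto.add (tendsto_const_nhds (x := u)) this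
      exact tendsto_of_tendsto_of_tendsto_of_le_of_le
        (tendsto_const_nhds) h₁ (fun n => (hq n).1.le) (fun n => (hq n).2.le)
    have htendw : Filter.Tendsto (fun n => (q n : ℝ)) Filter.atTop (nhdsWithin u (Set.Ici 0)) := by
      rw [tendsto_nhdsWithin_iff]
      exact ⟨htend, Filter.Eventually.of_forall fun n => le_trans hu (hq n).1.le⟩
    have hLq : ∀ n, L (q n) = (q n : ℝ) * L 1 := by
      intro n
      exact hLrat (q n) (by exact_mod_cast (le_trans hu (hq n).1.le : (0:ℝ) ≤ q n))
    have t1 : Filter.Tendsto (fun n => L (q n)) Filter.atTop (nhds (L u)) :=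
      (hLcont u hu).tendsto.comp htendw
    have t2 : Filter.Tendsto (fun n => L (q n)) Filter.atTop (nhds (u * L 1)) := by
      simp only [hLq]
      exact htend.mul tendsto_const_nhds
    exact tendsto_nhds_unique t1 t2
  have hform : ∀ x ∈ Set.Ioc (0:ℝ) 1, Φ x = x ^ (-(L 1)) := by
    intro x hx
    have hlog : Real.log (Φ x) = (-(L 1)) * Real.log x := by
      have hu : 0 ≤ -Real.log x := by
        rw [neg_nonneg]
        exact Real.log_nonpos hx.1.le hx.2
      have hex : Real.exp (-(-Real.log x)) = x := by
        rw [neg_neg, Real.exp_log hx.1]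
      have := hlin (-Real.log x) hu
      simp only [hL, hex] at this
      rw [this]; ring
    have := Real.exp_log (hpos x hx)
    rw [← this, hlog, Real.rpow_def_of_pos hx.1]
    ring_nf
  refine ⟨-(L 1), ?_, hform⟩
  by_contra hα
  push_neg at hα
  have hseq : ∀ n : ℕ, (1:ℝ)/(n+2) ∈ Set.Ioc (0:ℝ) 1 := by
    intro n
    constructor
    · positivity
    · rw [div_le_one (by positivity)]
      have : (0:ℝ) ≤ (n:ℝ) := n.cast_nonneg
      linarith
  have htend0 : Filter.Tendsto (fun n : ℕ => (1:ℝ)/(n+2)) Filter.atTop (nhds 0) := by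
    have := tendsto_one_div_add_atTop_nhds_zero_nat (𝕜 := ℝ)
    have h2 : Filter.Tendsto (fun n : ℕ => (n:ℝ) + 2) Filter.atTop Filter.atTop := by
      exact Filter.tendsto_atTop_add_const_right _ 2 tendsto_natCast_atTop_atTop
    exact Filter.Tendsto.comp tendsto_inv_atTop_zero h2 |>.congr (fun n => by
      rw [Function.comp_apply, one_div])
  have htendw : Filter.Tendsto (fun n : ℕ => (1:ℝ)/(n+2)) Filter.atTop
      (nhdsWithin 0 (Set.Icc 0 1)) := by
    rw [tendsto_nhdsWithin_iff]
    exact ⟨htend0, Filter.Eventually.of_forall fun n => ⟨(hseq n).1.le, (hseq n).2⟩⟩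
  have hΦ0 : ContinuousWithinAt Φ (Set.Icc 0 1) 0 := hc 0 ⟨le_refl 0, zero_le_one⟩
  have htendΦ : Filter.Tendsto (fun n : ℕ => Φ ((1:ℝ)/(n+2))) Filter.atTop (nhds 0) := by
    have := hΦ0.tendsto.comp htendw
    rwa [h0] at this
  have hge : ∀ n : ℕ, (1:ℝ) ≤ Φ ((1:ℝ)/(n+2)) := by
    intro n
    rw [hform _ (hseq n)]
    exact Real.one_le_rpow_of_pos_of_le_one_of_nonpos (hseq n).1 (hseq n).2 (by linarith)
  have := ge_of_tendsto htendΦ (Filter.Eventually.of_forall hge)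
  linarith

theorem fwd {Ω Θ : Type*} [Fintype Ω] [Fintype Θ]
    (hΩ : 3 ≤ Fintype.card Ω) (hΘ : 2 ≤ Fintype.card Θ)
    (f : (Ω → ℝ) → Ω → ℝ) (hfmap : ∀ p, IsDist p → IsDist (f p))
    (g : Ω → (Θ → ℝ) → Θ → ℝ)
    (hgnn : ∀ (ω : Ω) σ, IsDist σ → ∀ θ, 0 ≤ g ω σ θ)
    (hfpos : ∀ p, IsDist p → ∀ ω, (f p ω = 0 ↔ p ω = 0))
    (hfcont : ContinuousOn f {p | IsDist p})
    (hgpos : ∀ ω : Ω, ∀ σ, IsDist σ → ∀ θ, (g ω σ θ = 0 ↔ σ θ = 0))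
    (hgcont : ∀ ω : Ω, ContinuousOn (g ω) {σ | IsDist σ})
    (hco : GretherCoherent f g) :
    ∃ (ψ : Ω → ℝ) (γ : Θ → ℝ) (α : ℝ),
      (∀ ω, 0 < ψ ω) ∧ (∀ θ, 0 < γ θ) ∧ 0 < α ∧
      (∀ p, IsDist p → ∀ ω,
        f p ω = ψ ω * p ω ^ α / ∑ ω', ψ ω' * p ω' ^ α) ∧
      (∀ σ : Ω → Θ → ℝ, (∀ ω, IsDist (σ ω)) → ∀ ω θ,
        g ω (σ ω) θ = γ θ * σ ω θ ^ α) := by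
  classical
  haveI : Nonempty Ω := Fintype.card_pos_iff.1 (by omega)
  haveI : Nonempty Θ := Fintype.card_pos_iff.1 (by omega)
  obtain ⟨ω₁, ω₂, hω12⟩ := Fintype.exists_pair_of_one_lt_card (by omega : 1 < Fintype.card Ω)
  obtain ⟨θ₀, θ₁, hθ01⟩ := Fintype.exists_pair_of_one_lt_card (by omega : 1 < Fintype.card Θ)
  set n : ℝ := (Fintype.card Ω : ℝ) with hndef
  have hn : (0:ℝ) < n := by
    rw [hndef]; exact_mod_cast (by omega : 0 < Fintype.card Ω)
  set up : Ω → ℝ := fun _ => n⁻¹ with hupdef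
  have hup : IsDist up := by
    constructor
    · intro ω; positivity
    · rw [hupdef]
      rw [Finset.sum_const, Finset.card_univ, nsmul_eq_mul, ← hndef,
        mul_inv_cancel₀ hn.ne']
  have hψ : ∀ ω, 0 < f up ω := by
    intro ω
    refine lt_of_le_of_ne ((hfmap up hup).1 ω) (Ne.symm fun h0 => ?_)
    exact (inv_ne_zero hn.ne') ((hfpos up hup ω).1 h0)
  -- Step A : g does not depend on ω
  have hgZ : ∀ s, IsDist s → ∀ θ, s θ ≠ 0 → ∀ ω ω', g ω s θ = g ω' s θ := by
    have key : ∀ s, IsDist s → ∀ θ, s θ ≠ 0 → ∀ ω,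
        g ω s θ = ∑ ω'', f up ω'' * g ω'' s θ := by
      intro s hs θ hsθ ω
      have hsθpos : 0 < s θ := (hs.1 θ).lt_of_ne (Ne.symm hsθ)
      have hgp : ∀ ω', 0 < g ω' s θ := fun ω' =>
        lt_of_le_of_ne (hgnn ω' s hs θ) (Ne.symm fun h => hsθ ((hgpos ω' s hs θ).1 h))
      have hS : 0 < ∑ ω', up ω' * s θ :=
        Finset.sum_pos (fun i _ => mul_pos (by positivity) hsθpos) Finset.univ_nonempty
      have hZ : 0 < ∑ ω', f up ω' * g ω' s θ :=
        Finset.sum_pos (fun i _ => mul_pos (hψ i) (hgp i)) Finset.univ_nonempty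
      have hb : bayes (fun _ => s) up θ = up := by
        funext ω'
        show up ω' * s θ / (∑ ω'', up ω'' * s θ) = up ω'
        rw [← Finset.sum_mul, hup.2, one_mul, mul_div_assoc, div_self hsθ, mul_one]
      have hk := hco up hup (fun _ => s) (fun _ => hs) θ hS hZ ω
      rw [hb] at hk
      -- hk : f up ω = f up ω * g ω s θ / Z
      have h2 : f up ω * (∑ ω'', f up ω'' * g ω'' s θ) = f up ω * g ω s θ := by
        conv_lhs => rw [hk]
        exact div_mul_cancel₀ _ hZ.ne'
      exact (mul_left_cancel₀ (hψ ω).ne' h2).symm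
    intro s hs θ hsθ ω ω'
    rw [key s hs θ hsθ ω, key s hs θ hsθ ω']
  -- Step B : the signal distortion function φ
  set sfun : ℝ → Θ → ℝ :=
    fun x θ => (if θ = θ₀ then x else 0) + (if θ = θ₁ then 1 - x else 0) with hsfundef
  have hsθ₀val : ∀ x, sfun x θ₀ = x := by
    intro x
    simp [hsfundef, hθ01]
  have hsdist : ∀ x, 0 ≤ x → x ≤ 1 → IsDist (sfun x) := by
    intro x hx0 hx1
    constructor
    · intro θ
      simp only [hsfundef]
      split_ifs <;> linarith
    · simp only [hsfundef]
      rw [Finset.sum_add_distrib, Finset.sum_ite_eq' Finset.univ θ₀ (fun _ => x),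
        Finset.sum_ite_eq' Finset.univ θ₁ (fun _ => 1 - x)]
      simp only [Finset.mem_univ, if_true]
      ring
  set φ : ℝ → ℝ := fun x => g ω₁ (sfun x) θ₀ with hφdef
  have hφpos : ∀ x ∈ Set.Ioc (0:ℝ) 1, 0 < φ x := by
    intro x hx
    have hd := hsdist x hx.1.le hx.2
    refine lt_of_le_of_ne (hgnn ω₁ _ hd θ₀) (Ne.symm fun h => ?_)
    have h2 := (hgpos ω₁ _ hd θ₀).1 h
    rw [hsθ₀val] at h2
    exact hx.1.ne' h2
  have hφ0 : φ 0 = 0 :=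
    (hgpos ω₁ _ (hsdist 0 le_rfl zero_le_one) θ₀).2 (hsθ₀val 0)
  have hφcont : ContinuousOn φ (Set.Icc 0 1) := by
    have hsc : Continuous sfun := by
      rw [hsfundef]
      apply continuous_pi
      intro θ
      apply Continuous.add
      · by_cases h : θ = θ₀ <;> simp [h] <;> fun_prop
      · by_cases h : θ = θ₁ <;> simp [h] <;> fun_prop
    have hmaps : Set.MapsTo sfun (Set.Icc 0 1) {s : Θ → ℝ | IsDist s} :=
      fun x hx => hsdist x hx.1 hx.2
    exact (continuous_apply θ₀).comp_continuousOn
      ((hgcont ω₁).comp hsc.continuousOn hmaps)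
  have hφeq : ∀ ω x, x ∈ Set.Ioc (0:ℝ) 1 → g ω (sfun x) θ₀ = φ x := by
    intro ω x hx
    exact hgZ (sfun x) (hsdist x hx.1.le hx.2) θ₀
      (by rw [hsθ₀val]; exact hx.1.ne') ω ω₁
  -- Step C : the master equation
  have hstar : ∀ t : Ω → ℝ, (∀ ω, t ω ∈ Set.Ioc (0:ℝ) 1) → ∀ ω,
      f (fun ω' => t ω' / ∑ ω'', t ω'') ω
        = f up ω * φ (t ω) / ∑ ω', f up ω' * φ (t ω') := by
    intro t ht ω
    have hσd : ∀ ω', IsDist (sfun (t ω')) := fun ω' =>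
      hsdist _ (ht ω').1.le (ht ω').2
    have htpos : ∀ ω', 0 < t ω' := fun ω' => (ht ω').1
    have htsum : 0 < ∑ ω'', t ω'' :=
      Finset.sum_pos (fun i _ => htpos i) Finset.univ_nonempty
    have hS : 0 < ∑ ω', up ω' * sfun (t ω') θ₀ := by
      refine Finset.sum_pos (fun i _ => ?_) Finset.univ_nonempty
      rw [hsθ₀val]
      exact mul_pos (by positivity) (htpos i)
    have hgφ : ∀ ω', g ω' (sfun (t ω')) θ₀ = φ (t ω') := fun ω' => hφeq ω' _ (ht ω')
    have hZ : 0 < ∑ ω', f up ω' * g ω' (sfun (t ω')) θ₀ := by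
      refine Finset.sum_pos (fun i _ => ?_) Finset.univ_nonempty
      rw [hgφ i]
      exact mul_pos (hψ i) (hφpos _ (ht i))
    have hk := hco up hup (fun ω' => sfun (t ω')) hσd θ₀ hS hZ ω
    have hbeq : bayes (fun ω' => sfun (t ω')) up θ₀ = fun ω' => t ω' / ∑ ω'', t ω'' := by
      funext ω'
      show up ω' * sfun (t ω') θ₀ / (∑ ω'', up ω'' * sfun (t ω'') θ₀) = _
      have : ∀ ω'', up ω'' * sfun (t ω'') θ₀ = n⁻¹ * t ω'' := fun ω'' => by
        rw [hsθ₀val]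
      rw [Finset.sum_congr rfl (fun ω'' _ => this ω''), this ω', ← Finset.mul_sum,
        mul_div_mul_left _ _ (inv_ne_zero hn.ne')]
    rw [hbeq] at hk
    rw [hk, hgφ ω, Finset.sum_congr rfl (fun ω' _ => by rw [hgφ ω'])]
  -- Step D : multiplicativity of φ
  have hmulφ : ∀ lam ∈ Set.Ioc (0:ℝ) 1, ∀ x ∈ Set.Ioc (0:ℝ) 1,
      φ (lam * x) * φ 1 = φ lam * φ x := by
    intro lam hlam x hx
    have h1m : (1:ℝ) ∈ Set.Ioc (0:ℝ) 1 := ⟨one_pos, le_rfl⟩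
    have hlx : lam * x ∈ Set.Ioc (0:ℝ) 1 :=
      ⟨mul_pos hlam.1 hx.1, by simpa using mul_le_mul hlam.2 hx.2 hx.1.le zero_le_one⟩
    set t1 : Ω → ℝ := fun ω => if ω = ω₁ then x else 1 with ht1def
    have ht1 : ∀ ω, t1 ω ∈ Set.Ioc (0:ℝ) 1 := by
      intro ω; simp only [ht1def]; split_ifs
      · exact hx
      · exact h1m
    set t2 : Ω → ℝ := fun ω => lam * t1 ω with ht2def
    have ht2 : ∀ ω, t2 ω ∈ Set.Ioc (0:ℝ) 1 := by
      intro ω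
      exact ⟨mul_pos hlam.1 (ht1 ω).1,
        by simpa using mul_le_mul hlam.2 (ht1 ω).2 (ht1 ω).1.le zero_le_one⟩
    have hq : (fun ω' => t2 ω' / ∑ ω'', t2 ω'') = (fun ω' => t1 ω' / ∑ ω'', t1 ω'') := by
      funext ω'
      simp only [ht2def]
      rw [← Finset.mul_sum, mul_div_mul_left _ _ hlam.1.ne']
    have hSig1 : 0 < ∑ ω', f up ω' * φ (t1 ω') :=
      Finset.sum_pos (fun i _ => mul_pos (hψ i) (hφpos _ (ht1 i))) Finset.univ_nonempty
    have hSig2 : 0 < ∑ ω', f up ω' * φ (t2 ω') :=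
      Finset.sum_pos (fun i _ => mul_pos (hψ i) (hφpos _ (ht2 i))) Finset.univ_nonempty
    have e1 := hstar t1 ht1 ω₁
    have e2 := hstar t1 ht1 ω₂
    have e3 := hstar t2 ht2 ω₁
    have e4 := hstar t2 ht2 ω₂
    rw [hq] at e3 e4
    have hω21 : ω₂ ≠ ω₁ := fun h => hω12 h.symm
    have ht1ω₁ : t1 ω₁ = x := by simp [ht1def]
    have ht1ω₂ : t1 ω₂ = 1 := by simp [ht1def, hω21]
    have ht2ω₁ : t2 ω₁ = lam * x := by simp [ht2def, ht1def]
    have ht2ω₂ : t2 ω₂ = lam := by simp [ht2def, ht1def, hω21]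
    rw [ht1ω₁] at e1
    rw [ht1ω₂] at e2
    rw [ht2ω₁] at e3
    rw [ht2ω₂] at e4
    -- e1 : f q ω₁ = ψ₁ φ x / Σ1 ; e3 : f q ω₁ = ψ₁ φ(lam x) / Σ2
    have c1 : φ x * (∑ ω', f up ω' * φ (t2 ω')) =
        φ (lam * x) * (∑ ω', f up ω' * φ (t1 ω')) := by
      have h := e1.symm.trans e3
      rw [div_eq_div_iff hSig1.ne' hSig2.ne'] at h
      refine mul_left_cancel₀ (hψ ω₁).ne' ?_
      linear_combination h
    have c2 : φ 1 * (∑ ω', f up ω' * φ (t2 ω')) =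
        φ lam * (∑ ω', f up ω' * φ (t1 ω')) := by
      have h := e2.symm.trans e4
      rw [div_eq_div_iff hSig1.ne' hSig2.ne'] at h
      refine mul_left_cancel₀ (hψ ω₂).ne' ?_
      linear_combination h
    refine mul_right_cancel₀ (mul_pos hSig1 hSig2).ne' ?_
    linear_combination (φ (lam * x) * (∑ ω', f up ω' * φ (t1 ω'))) * c2
      - (φ lam * (∑ ω', f up ω' * φ (t1 ω'))) * c1
  -- Step E : solve the Cauchy equation
  have hφ1 : 0 < φ 1 := hφpos 1 ⟨one_pos, le_rfl⟩
  obtain ⟨α, hα, hΦ⟩ := cauchy_pow (Φ := fun x => φ x / φ 1)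
    (hφcont.div_const _)
    (fun x hx => div_pos (hφpos x hx) hφ1)
    (by simp [hφ0])
    (div_self hφ1.ne')
    (by
      intro x hx y hy
      have h := hmulφ x hx y hy
      show φ (x * y) / φ 1 = φ x / φ 1 * (φ y / φ 1)
      rw [div_mul_div_comm, div_eq_div_iff hφ1.ne' (mul_pos hφ1 hφ1).ne']
      linear_combination φ 1 * h)
  have hφx : ∀ x ∈ Set.Ioc (0:ℝ) 1, φ x = φ 1 * x ^ α := by
    intro x hx
    have := hΦ x hx
    rw [div_eq_iff hφ1.ne'] at this
    rw [this]; ring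
  -- Step F : formula for f on interior distributions
  have hint : ∀ q, IsDist q → (∀ ω, 0 < q ω) → ∀ ω,
      f q ω = f up ω * q ω ^ α / ∑ ω', f up ω' * q ω' ^ α := by
    intro q hq hqpos ω
    have ht : ∀ ω', q ω' ∈ Set.Ioc (0:ℝ) 1 := fun ω' => ⟨hqpos ω', hq.le_one ω'⟩
    have h := hstar q ht ω
    rw [show (fun ω' => q ω' / ∑ ω'', q ω'') = q from
      funext fun ω' => by rw [hq.2, div_one]] at h
    rw [h, hφx _ (ht ω),
      Finset.sum_congr rfl (fun ω' _ => by rw [hφx _ (ht ω')])]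
    rw [show ∑ ω', f up ω' * (φ 1 * q ω' ^ α) = φ 1 * ∑ ω', f up ω' * q ω' ^ α by
      rw [Finset.mul_sum]; exact Finset.sum_congr rfl fun ω' _ => by ring]
    rw [show f up ω * (φ 1 * q ω ^ α) = φ 1 * (f up ω * q ω ^ α) by ring,
      mul_div_mul_left _ _ hφ1.ne']
  -- Step G : formula for f on all distributions, by continuity
  have hεt : Filter.Tendsto (fun k : ℕ => (1:ℝ)/(k+2)) Filter.atTop (nhds 0) := by
    have h2 : Filter.Tendsto (fun k : ℕ => (k:ℝ) + 2) Filter.atTop Filter.atTop :=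
      Filter.tendsto_atTop_add_const_right _ 2 tendsto_natCast_atTop_atTop
    exact (tendsto_inv_atTop_zero.comp h2).congr (fun k => by
      rw [Function.comp_apply, one_div])
  have hff : ∀ p, IsDist p → ∀ ω,
      f p ω = f up ω * p ω ^ α / ∑ ω', f up ω' * p ω' ^ α := by
    intro p hp ω
    set ε : ℕ → ℝ := fun k => (1:ℝ)/(k+2) with hεdef
    have hε0 : ∀ k, 0 < ε k := fun k => by positivity
    have hε1 : ∀ k, ε k < 1 := by
      intro k
      rw [hεdef]
      rw [div_lt_one (by positivity)]
      have : (0:ℝ) ≤ (k:ℝ) := k.cast_nonneg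
      linarith
    set c : ℕ → Ω → ℝ := fun k ω' => (1 - ε k) * p ω' + ε k * up ω' with hcdef
    have hcd : ∀ k, IsDist (c k) := by
      intro k
      constructor
      · intro ω'
        exact add_nonneg (mul_nonneg (by linarith [hε1 k]) (hp.1 ω'))
          (mul_nonneg (hε0 k).le (hup.1 ω'))
      · simp only [hcdef]
        rw [Finset.sum_add_distrib, ← Finset.mul_sum, ← Finset.mul_sum, hp.2, hup.2]
        ring
    have hcpos : ∀ k ω', 0 < c k ω' := fun k ω' =>
      add_pos_of_nonneg_of_pos (mul_nonneg (by linarith [hε1 k]) (hp.1 ω'))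
        (mul_pos (hε0 k) (by positivity))
    have htc : Filter.Tendsto c Filter.atTop (nhds p) := by
      rw [tendsto_pi_nhds]
      intro ω'
      have : Filter.Tendsto (fun k => (1 - ε k) * p ω' + ε k * up ω') Filter.atTop
          (nhds ((1 - 0) * p ω' + 0 * up ω')) := by
        exact (((tendsto_const_nhds.sub hεt).mul tendsto_const_nhds).add
          (hεt.mul tendsto_const_nhds))
      simpa using this
    have htcw : Filter.Tendsto c Filter.atTop (nhdsWithin p {q : Ω → ℝ | IsDist q}) := by
      rw [tendsto_nhdsWithin_iff]
      exact ⟨htc, Filter.Eventually.of_forall fun k => hcd k⟩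
    have t1 : Filter.Tendsto (fun k => f (c k) ω) Filter.atTop (nhds (f p ω)) := by
      have hev : ContinuousWithinAt (fun q => f q ω) {q : Ω → ℝ | IsDist q} p :=
        (continuous_apply ω).continuousAt.comp_continuousWithinAt (hfcont p hp)
      exact hev.tendsto.comp htcw
    have hrc : ∀ ω', Filter.Tendsto (fun k => c k ω' ^ α) Filter.atTop
        (nhds (p ω' ^ α)) := by
      intro ω'
      have h1 : Filter.Tendsto (fun k => c k ω') Filter.atTop (nhds (p ω')) :=
        tendsto_pi_nhds.1 htc ω'
      exact (Real.continuousAt_rpow_const (p ω') α (Or.inr hα.le)).tendsto.comp h1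
    have hdp : 0 < ∑ ω', f up ω' * p ω' ^ α := den_pos hψ hp
    have t2 : Filter.Tendsto (fun k => f up ω * c k ω ^ α / ∑ ω', f up ω' * c k ω' ^ α)
        Filter.atTop (nhds (f up ω * p ω ^ α / ∑ ω', f up ω' * p ω' ^ α)) := by
      apply Filter.Tendsto.div
      · exact tendsto_const_nhds.mul (hrc ω)
      · exact tendsto_finset_sum _ fun ω' _ => tendsto_const_nhds.mul (hrc ω')
      · exact hdp.ne'
    have t3 : Filter.Tendsto (fun k => f (c k) ω) Filter.atTop
        (nhds (f up ω * p ω ^ α / ∑ ω', f up ω' * p ω' ^ α)) :=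
      t2.congr (fun k => (hint (c k) (hcd k) (hcpos k) ω).symm)
    exact tendsto_nhds_unique t1 t3
  -- Step H : formula for g
  set m : ℝ := (Fintype.card Θ : ℝ) with hmdef
  have hm : (0:ℝ) < m := by
    rw [hmdef]; exact_mod_cast (by omega : 0 < Fintype.card Θ)
  set uΘ : Θ → ℝ := fun _ => m⁻¹ with huΘdef
  have huΘ : IsDist uΘ := by
    constructor
    · intro θ; positivity
    · rw [huΘdef]
      rw [Finset.sum_const, Finset.card_univ, nsmul_eq_mul, ← hmdef,
        mul_inv_cancel₀ hm.ne']
  have hgu : ∀ ω θ, 0 < g ω uΘ θ := by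
    intro ω θ
    refine lt_of_le_of_ne (hgnn ω uΘ huΘ θ) (Ne.symm fun h => ?_)
    exact (inv_ne_zero hm.ne') ((hgpos ω uΘ huΘ θ).1 h)
  have hgform : ∀ s, IsDist s → ∀ ω θ,
      g ω s θ = (g ω₁ uΘ θ * m ^ α) * s θ ^ α := by
    intro s hs ω θ
    by_cases hzero : s θ = 0
    · rw [(hgpos ω s hs θ).2 hzero, hzero, Real.zero_rpow hα.ne', mul_zero]
    have hsθ : 0 < s θ := (hs.1 θ).lt_of_ne (Ne.symm hzero)
    suffices hkey : g ω₁ s θ = (g ω₁ uΘ θ * m ^ α) * s θ ^ α by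
      rw [hgZ s hs θ hzero ω ω₁]; exact hkey
    set σ : Ω → Θ → ℝ := fun ω' => if ω' = ω₁ then s else uΘ with hσdef
    have hσd : ∀ ω', IsDist (σ ω') := by
      intro ω'; simp only [hσdef]; split_ifs
      · exact hs
      · exact huΘ
    have hσpos : ∀ ω', 0 < σ ω' θ := by
      intro ω'; simp only [hσdef]; split_ifs
      · exact hsθ
      · positivity
    have hS : 0 < ∑ ω', up ω' * σ ω' θ :=
      Finset.sum_pos (fun i _ => mul_pos (by positivity) (hσpos i)) Finset.univ_nonempty
    have hgσp : ∀ ω', 0 < g ω' (σ ω') θ := fun ω' =>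
      lt_of_le_of_ne (hgnn ω' _ (hσd ω') θ)
        (Ne.symm fun h => (hσpos ω').ne' ((hgpos ω' _ (hσd ω') θ).1 h))
    have hZ : 0 < ∑ ω', f up ω' * g ω' (σ ω') θ :=
      Finset.sum_pos (fun i _ => mul_pos (hψ i) (hgσp i)) Finset.univ_nonempty
    have hB : IsDist (bayes σ up θ) := by
      constructor
      · intro ω'
        exact div_nonneg (mul_nonneg (hup.1 ω') ((hσd ω').1 θ)) hS.le
      · rw [show (∑ ω', bayes σ up θ ω') = (∑ ω', up ω' * σ ω' θ) / ∑ ω', up ω' * σ ω' θ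
          from by rw [Finset.sum_div]; rfl]
        exact div_self hS.ne'
    have hBval : ∀ ω', bayes σ up θ ω' = σ ω' θ * (n⁻¹ / ∑ ω'', up ω'' * σ ω'' θ) := by
      intro ω'
      show up ω' * σ ω' θ / _ = _
      rw [hupdef]
      ring
    have hκ : 0 < n⁻¹ / ∑ ω'', up ω'' * σ ω'' θ := by positivity
    have hD : 0 < ∑ ω', f up ω' * bayes σ up θ ω' ^ α := den_pos hψ hB
    have e1 := hco up hup σ hσd θ hS hZ ω₁
    have e2 := hco up hup σ hσd θ hS hZ ω₂
    rw [hff _ hB ω₁] at e1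
    rw [hff _ hB ω₂] at e2
    have hσω₁ : σ ω₁ = s := by simp [hσdef]
    have hσω₂ : σ ω₂ = uΘ := by simp [hσdef, hω12.symm]
    rw [hσω₁] at e1
    rw [hσω₂] at e2
    have c1 : bayes σ up θ ω₁ ^ α * (∑ ω', f up ω' * g ω' (σ ω') θ)
        = g ω₁ s θ * (∑ ω', f up ω' * bayes σ up θ ω' ^ α) := by
      rw [div_eq_div_iff hD.ne' hZ.ne'] at e1
      refine mul_left_cancel₀ (hψ ω₁).ne' ?_
      linear_combination e1
    have c2 : bayes σ up θ ω₂ ^ α * (∑ ω', f up ω' * g ω' (σ ω') θ)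
        = g ω₂ uΘ θ * (∑ ω', f up ω' * bayes σ up θ ω' ^ α) := by
      rw [div_eq_div_iff hD.ne' hZ.ne'] at e2
      refine mul_left_cancel₀ (hψ ω₂).ne' ?_
      linear_combination e2
    have hr1 : bayes σ up θ ω₁ ^ α
        = s θ ^ α * (n⁻¹ / ∑ ω'', up ω'' * σ ω'' θ) ^ α := by
      rw [hBval ω₁, hσω₁, Real.mul_rpow hsθ.le hκ.le]
    have hr2 : bayes σ up θ ω₂ ^ α
        = (m⁻¹) ^ α * (n⁻¹ / ∑ ω'', up ω'' * σ ω'' θ) ^ α := by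
      rw [hBval ω₂, hσω₂, Real.mul_rpow (by positivity : (0:ℝ) ≤ m⁻¹) hκ.le]
    rw [hr1] at c1
    rw [hr2] at c2
    have hg21 : g ω₂ uΘ θ = g ω₁ uΘ θ := hgZ uΘ huΘ θ (inv_ne_zero hm.ne') ω₂ ω₁
    rw [hg21] at c2
    have h6 : g ω₁ s θ * (m⁻¹ ^ α) = g ω₁ uΘ θ * s θ ^ α := by
      refine mul_right_cancel₀ hD.ne' ?_
      linear_combination (s θ ^ α) * c2 - ((m⁻¹:ℝ) ^ α) * c1
    have hmα : (m⁻¹:ℝ) ^ α * m ^ α = 1 := by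
      rw [← Real.mul_rpow (by positivity : (0:ℝ) ≤ m⁻¹) hm.le,
        inv_mul_cancel₀ hm.ne', Real.one_rpow]
    linear_combination (m ^ α) * h6 - (g ω₁ s θ) * hmα
  refine ⟨f up, fun θ => g ω₁ uΘ θ * m ^ α, α, hψ,
    fun θ => mul_pos (hgu ω₁ θ) (Real.rpow_pos_of_pos hm α), hα, hff, ?_⟩
  intro σ hσ ω θ
  exact hgform (σ ω) (hσ ω) ω θ

theorem bwd {Ω Θ : Type*} [Fintype Ω] [Fintype Θ]
    (f : (Ω → ℝ) → Ω → ℝ)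
    (g : Ω → (Θ → ℝ) → Θ → ℝ)
    (ψ : Ω → ℝ) (γ : Θ → ℝ) (α : ℝ)
    (hψ : ∀ ω, 0 < ψ ω) (hγ : ∀ θ, 0 < γ θ) (hα : 0 < α)
    (hf : ∀ p, IsDist p → ∀ ω,
        f p ω = ψ ω * p ω ^ α / ∑ ω', ψ ω' * p ω' ^ α)
    (hg : ∀ σ : Ω → Θ → ℝ, (∀ ω, IsDist (σ ω)) → ∀ ω θ,
        g ω (σ ω) θ = γ θ * σ ω θ ^ α) :
    ((∀ p, IsDist p → ∀ ω, (f p ω = 0 ↔ p ω = 0)) ∧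
      ContinuousOn f {p | IsDist p} ∧
      (∀ ω : Ω, (∀ σ, IsDist σ → ∀ θ, (g ω σ θ = 0 ↔ σ θ = 0)) ∧
        ContinuousOn (g ω) {σ | IsDist σ}) ∧
      GretherCoherent f g) := by
  have hg' : ∀ s, IsDist s → ∀ ω θ, g ω s θ = γ θ * s θ ^ α :=
    fun s hs ω θ => hg (fun _ => s) (fun _ => hs) ω θ
  have hrpow_cont : Continuous (fun x : ℝ => x ^ α) :=
    continuous_iff_continuousAt.2 fun x => Real.continuousAt_rpow_const x α (Or.inr hα.le)
  refine ⟨?_, ?_, ?_, ?_⟩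
  · -- positivity of f
    intro p hp ω
    rw [hf p hp ω, div_eq_zero_iff]
    have hden := den_pos hψ hp (α := α)
    constructor
    · rintro (h | h)
      · rcases mul_eq_zero.1 h with h' | h'
        · exact absurd h' (ne_of_gt (hψ ω))
        · exact ((Real.rpow_eq_zero (hp.1 ω) (ne_of_gt hα)).1 h')
      · exact absurd h (ne_of_gt hden)
    · intro h
      left
      rw [h, Real.zero_rpow (ne_of_gt hα), mul_zero]
  · -- continuity of f
    have hF : ContinuousOn (fun p : Ω → ℝ => fun ω => ψ ω * p ω ^ α / ∑ ω', ψ ω' * p ω' ^ α)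
        {p | IsDist p} := by
      rw [continuousOn_pi]
      intro ω
      apply ContinuousOn.div
      · exact (continuous_const.mul (hrpow_cont.comp (continuous_apply ω))).continuousOn
      · exact (continuous_finset_sum _ fun i _ =>
          continuous_const.mul (hrpow_cont.comp (continuous_apply i))).continuousOn
      · intro p hp
        exact ne_of_gt (den_pos hψ hp)
    exact hF.congr (fun p hp => funext fun ω => hf p hp ω)
  · -- positivity and continuity of g
    intro ω
    constructor
    · intro s hs θ
      rw [hg' s hs ω θ]
      constructor
      · intro h
        rcases mul_eq_zero.1 h with h' | h'
        · exact absurd h' (ne_of_gt (hγ θ))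
        · exact (Real.rpow_eq_zero (hs.1 θ) (ne_of_gt hα)).1 h'
      · intro h
        rw [h, Real.zero_rpow (ne_of_gt hα), mul_zero]
    · have hG : ContinuousOn (fun s : Θ → ℝ => fun θ => γ θ * s θ ^ α) {s | IsDist s} := by
        rw [continuousOn_pi]
        intro θ
        exact (continuous_const.mul (hrpow_cont.comp (continuous_apply θ))).continuousOn
      exact hG.congr (fun s hs => funext fun θ => hg' s hs ω θ)
  · -- coherence
    intro p hp σ hσ θ hS hZ ω
    set S := ∑ ω', p ω' * σ ω' θ with hSdef
    have hb : IsDist (bayes σ p θ) := by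
      constructor
      · intro ω'
        exact div_nonneg (mul_nonneg (hp.1 ω') ((hσ ω').1 θ)) hS.le
      · rw [show (∑ ω', bayes σ p θ ω') = (∑ ω', p ω' * σ ω' θ) / S by
          rw [Finset.sum_div]; rfl]
        exact div_self (ne_of_gt hS)
    set A : Ω → ℝ := fun ω' => ψ ω' * (p ω' * σ ω' θ) ^ α with hA
    have hApos : 0 < ∑ ω', A ω' := by
      obtain ⟨ω'', hω''⟩ : ∃ ω'', 0 < p ω'' * σ ω'' θ := by
        by_contra h
        push_neg at h
        have : ∀ ω'', p ω'' * σ ω'' θ = 0 := fun ω'' =>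
          le_antisymm (h ω'') (mul_nonneg (hp.1 ω'') ((hσ ω'').1 θ))
        rw [hSdef] at hS
        simp only [this, Finset.sum_const_zero] at hS
        exact lt_irrefl 0 hS
      refine Finset.sum_pos' (fun i _ => ?_) ⟨ω'', Finset.mem_univ ω'', ?_⟩
      · exact mul_nonneg (hψ i).le
          (Real.rpow_nonneg (mul_nonneg (hp.1 i) ((hσ i).1 θ)) α)
      · exact mul_pos (hψ ω'') (Real.rpow_pos_of_pos hω'' α)
    set C := ∑ ω', ψ ω' * p ω' ^ α with hC
    have hCpos : 0 < C := den_pos hψ hp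
    have hSα : (0:ℝ) < S ^ α := Real.rpow_pos_of_pos hS α
    -- LHS
    have hLHS : f (bayes σ p θ) ω = A ω / ∑ ω', A ω' := by
      rw [hf _ hb ω]
      have hbval : ∀ ω', ψ ω' * bayes σ p θ ω' ^ α = A ω' * (S ^ α)⁻¹ := by
        intro ω'
        show ψ ω' * (p ω' * σ ω' θ / S) ^ α = _
        rw [Real.div_rpow (mul_nonneg (hp.1 ω') ((hσ ω').1 θ)) hS.le, div_eq_mul_inv]
        ring
      simp only [hbval]
      rw [← Finset.sum_mul, mul_div_mul_right _ _ (by positivity : (S ^ α)⁻¹ ≠ 0)]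
    -- RHS
    have hterm : ∀ ω', f p ω' * g ω' (σ ω') θ = A ω' * (γ θ / C) := by
      intro ω'
      rw [hf p hp ω', hg σ hσ ω' θ, hA]
      simp only [← hC]
      rw [Real.mul_rpow (hp.1 ω') ((hσ ω').1 θ)]
      field_simp
    rw [hLHS]
    simp only [hterm]
    rw [← Finset.sum_mul, mul_div_mul_right _ _ (ne_of_gt (div_pos (hγ θ) hCpos))]

theorem stmt6 {Ω Θ : Type*} [Fintype Ω] [Fintype Θ]
    (hΩ : 3 ≤ Fintype.card Ω) (hΘ : 2 ≤ Fintype.card Θ)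
    (f : (Ω → ℝ) → Ω → ℝ) (hfmap : ∀ p, IsDist p → IsDist (f p))
    (g : Ω → (Θ → ℝ) → Θ → ℝ)
    (hgnn : ∀ (ω : Ω) σ, IsDist σ → ∀ θ, 0 ≤ g ω σ θ) :
    ((∀ p, IsDist p → ∀ ω, (f p ω = 0 ↔ p ω = 0)) ∧
      ContinuousOn f {p | IsDist p} ∧
      (∀ ω : Ω, (∀ σ, IsDist σ → ∀ θ, (g ω σ θ = 0 ↔ σ θ = 0)) ∧
        ContinuousOn (g ω) {σ | IsDist σ}) ∧
      GretherCoherent f g) ↔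
    ∃ (ψ : Ω → ℝ) (γ : Θ → ℝ) (α : ℝ),
      (∀ ω, 0 < ψ ω) ∧ (∀ θ, 0 < γ θ) ∧ 0 < α ∧
      (∀ p, IsDist p → ∀ ω,
        f p ω = ψ ω * p ω ^ α / ∑ ω', ψ ω' * p ω' ^ α) ∧
      (∀ σ : Ω → Θ → ℝ, (∀ ω, IsDist (σ ω)) → ∀ ω θ,
        g ω (σ ω) θ = γ θ * σ ω θ ^ α) := by
  constructor
  · rintro ⟨h1, h2, h3, h4⟩
    exact fwd hΩ hΘ f hfmap g hgnn h1 h2 (fun ω => (h3 ω).1) (fun ω => (h3 ω).2) h4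
  · rintro ⟨ψ, γ, α, hψ, hγ, hα, hf, hg⟩
    exact bwd f g ψ γ α hψ hγ hα hf hg
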